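/- Priority queue functional equation: for the single-server queue with two independent i.i.d. arrival flows of generating functions A (priority) and B, with state (X_t, Y_t) evolving by X_{t+1} = (X_t - 1)_+ + A_{t+1}, Y_{t+1} = (Y_t - 1_{X_t = 0})_+ + B_{t+1}, the trivariate generating function Φ(u,v,z) = Σ P(X_t=n, Y_t=m) u^n v^m z^t satisfies Φ(u,v,z)·(1 - zA(u)B(v)/u) = 1 - zA(u)B(v)·[Φ(0,v,z)(1/u - 1/v) + Φ(0,0,z)(1/v - 1)]. -/

import Mathlib

open MeasureTheory ProbabilityTheory

lemma pq_pow_split (u v : ℝ) (hu : u ≠ 0) (hv : v ≠ 0) (x y : ℕ) :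
    u ^ (x - 1) * v ^ (y - (if x = 0 then 1 else 0)) =
      u ^ x * v ^ y / u - (0:ℝ) ^ x * v ^ y / u +
        ((0:ℝ) ^ x * v ^ y / v - (0:ℝ) ^ x * (0:ℝ) ^ y / v) +
        (0:ℝ) ^ x * (0:ℝ) ^ y := by
  rcases x with _ | x
  · rcases y with _ | y
    · simp
    · simp [pow_succ]; field_simp
  · simp [pow_succ]; field_simp

lemma pq_integrable_of_bounded {Ω : Type*} [MeasurableSpace Ω] (μ : Measure Ω)
    [IsProbabilityMeasure μ] {f : Ω → ℝ} (hf : Measurable f) (h1 : ∀ ω, |f ω| ≤ 1) :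
    Integrable f μ :=
  Integrable.mono' (integrable_const 1) hf.aestronglyMeasurable (ae_of_all _ h1)

lemma pq_integral_comp_countable {Ω α : Type*} [MeasurableSpace Ω] [MeasurableSpace α]
    [Countable α] [MeasurableSingletonClass α]
    (μ : Measure Ω) [IsProbabilityMeasure μ] (Z : Ω → α) (hZ : Measurable Z)
    (g : α → ℝ) (hg : ∀ x, |g x| ≤ 1) :
    ∫ ω, g (Z ω) ∂μ = ∑' x, (μ {ω | Z ω = x}).toReal * g x := by
  rw [← integral_map hZ.aemeasurable (measurable_of_countable g).aestronglyMeasurable]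
  have : IsProbabilityMeasure (μ.map Z) := Measure.isProbabilityMeasure_map hZ.aemeasurable
  rw [integral_countable' (pq_integrable_of_bounded _ (measurable_of_countable g) hg)]
  congr 1; funext x
  rw [measureReal_def, Measure.map_apply hZ (measurableSet_singleton x), smul_eq_mul]
  congr 2

lemma pq_summable_fibers {Ω α : Type*} [MeasurableSpace Ω] [MeasurableSpace α]
    [Countable α] [MeasurableSingletonClass α]
    (μ : Measure Ω) [IsProbabilityMeasure μ] (Z : Ω → α) (hZ : Measurable Z) :
    Summable (fun x => (μ {ω | Z ω = x}).toReal) := by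
  apply ENNReal.summable_toReal
  have h : ∑' x, μ {ω | Z ω = x} ≤ μ Set.univ := by
    apply tsum_measure_le_measure_univ
    · intro x
      exact (hZ (measurableSet_singleton x)).nullMeasurableSet
    · intro x y hxy
      apply Disjoint.aedisjoint
      simp only [Set.disjoint_left]
      rintro ω h1 h2
      exact hxy (h1.symm.trans h2)
  intro h'
  rw [h', measure_univ] at h
  exact absurd h (by simp)

lemma pq_abs_g_le_one {u v : ℝ} (hu0 : 0 ≤ u) (hu1 : u ≤ 1) (hv0 : 0 ≤ v) (hv1 : v ≤ 1)
    (p : ℕ × ℕ) : |u ^ p.1 * v ^ p.2| ≤ 1 := by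
  rw [abs_of_nonneg (mul_nonneg (pow_nonneg hu0 _) (pow_nonneg hv0 _))]
  calc u ^ p.1 * v ^ p.2 ≤ 1 * 1 :=
        mul_le_mul (pow_le_one₀ hu0 hu1) (pow_le_one₀ hv0 hv1) (pow_nonneg hv0 _) zero_le_one
    _ = 1 := by ring

lemma pq_double_tsum_eq_integral {Ω : Type*} [MeasurableSpace Ω] (μ : Measure Ω)
    [IsProbabilityMeasure μ] (X Y : Ω → ℕ) (hX : Measurable X) (hY : Measurable Y)
    (u v : ℝ) (hu0 : 0 ≤ u) (hu1 : u ≤ 1) (hv0 : 0 ≤ v) (hv1 : v ≤ 1) :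
    (∑' n : ℕ, ∑' m : ℕ, (μ {ω | X ω = n ∧ Y ω = m}).toReal * u ^ n * v ^ m)
      = ∫ ω, u ^ X ω * v ^ Y ω ∂μ := by
  have hZ : Measurable (fun ω => (X ω, Y ω)) := hX.prodMk hY
  have hfib : ∀ p : ℕ × ℕ, {ω | (X ω, Y ω) = p} = {ω | X ω = p.1 ∧ Y ω = p.2} := by
    intro p; ext ω; simp [Prod.ext_iff]
  have hmain := pq_integral_comp_countable μ (fun ω => (X ω, Y ω)) hZ
      (fun p => u ^ p.1 * v ^ p.2) (pq_abs_g_le_one hu0 hu1 hv0 hv1)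
  rw [hmain]
  have hsum : Summable (fun p : ℕ × ℕ =>
      (μ {ω | (X ω, Y ω) = p}).toReal * (u ^ p.1 * v ^ p.2)) := by
    apply Summable.of_nonneg_of_le
    · intro p
      exact mul_nonneg ENNReal.toReal_nonneg
        (mul_nonneg (pow_nonneg hu0 _) (pow_nonneg hv0 _))
    · intro p
      calc (μ {ω | (X ω, Y ω) = p}).toReal * (u ^ p.1 * v ^ p.2)
          ≤ (μ {ω | (X ω, Y ω) = p}).toReal * 1 :=
            mul_le_mul_of_nonneg_left
              ((le_abs_self _).trans (pq_abs_g_le_one hu0 hu1 hv0 hv1 p))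
              ENNReal.toReal_nonneg
        _ = _ := mul_one _
    · exact pq_summable_fibers μ _ hZ
  rw [Summable.tsum_prod' hsum (fun b => hsum.prod_factor b)]
  congr 1; funext n; congr 1; funext m
  rw [hfib (n, m), mul_assoc]

def pqF : ℕ → (ℕ → ℕ × ℕ) → ℕ × ℕ
  | 0, _ => (0, 0)
  | t + 1, g =>
      ((pqF t g).1 - 1 + (g (t + 1)).1,
       (pqF t g).2 - (if (pqF t g).1 = 0 then 1 else 0) + (g (t + 1)).2)

lemma pqF_congr : ∀ (t : ℕ) (g g' : ℕ → ℕ × ℕ),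
    (∀ i ∈ Finset.range (t + 1), g i = g' i) → pqF t g = pqF t g'
  | 0, g, g', _ => rfl
  | t + 1, g, g', h => by
    have ih := pqF_congr t g g' (fun i hi => h i (Finset.mem_range.mpr
      (Nat.lt_succ_of_lt (Finset.mem_range.mp hi))))
    simp only [pqF, ih, h (t + 1) (Finset.self_mem_range_succ _)]

lemma pqF_measurable : ∀ t : ℕ, Measurable (pqF t)
  | 0 => measurable_const
  | t + 1 => by
    have ih := pqF_measurable t
    have h1 : Measurable fun g : ℕ → ℕ × ℕ => (pqF t g).1 := measurable_fst.comp ih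
    have h2 : Measurable fun g : ℕ → ℕ × ℕ => (pqF t g).2 := measurable_snd.comp ih
    have hev : Measurable fun g : ℕ → ℕ × ℕ => g (t + 1) := measurable_pi_apply _
    have hite : Measurable fun g : ℕ → ℕ × ℕ => (if (pqF t g).1 = 0 then 1 else 0 : ℕ) :=
      (measurable_of_countable (fun k : ℕ => if k = 0 then (1:ℕ) else 0)).comp h1
    exact ((h1.sub measurable_const).add (measurable_fst.comp hev)).prodMk
      ((h2.sub hite).add (measurable_snd.comp hev))

lemma pq_XY_eq_F {Ω : Type*} (A B X Y : ℕ → Ω → ℕ)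
    (hX0 : ∀ ω, X 0 ω = 0) (hY0 : ∀ ω, Y 0 ω = 0)
    (hXrec : ∀ t ω, X (t + 1) ω = (X t ω - 1) + A (t + 1) ω)
    (hYrec : ∀ t ω, Y (t + 1) ω = (Y t ω - (if X t ω = 0 then 1 else 0)) + B (t + 1) ω) :
    ∀ t ω, (X t ω, Y t ω) = pqF t (fun i => (A i ω, B i ω))
  | 0, ω => by simp [pqF, hX0, hY0]
  | t + 1, ω => by
    have ih := pq_XY_eq_F A B X Y hX0 hY0 hXrec hYrec t ω
    simp only [pqF, ← ih, hXrec, hYrec]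

lemma pq_indep {Ω : Type*} [MeasurableSpace Ω] (μ : Measure Ω)
    [IsProbabilityMeasure μ]
    (A B : ℕ → Ω → ℕ) (hAmeas : ∀ t, Measurable (A t)) (hBmeas : ∀ t, Measurable (B t))
    (hindep : iIndepFun (fun t ω => (A t ω, B t ω)) μ)
    (X Y : ℕ → Ω → ℕ)
    (hX0 : ∀ ω, X 0 ω = 0) (hY0 : ∀ ω, Y 0 ω = 0)
    (hXrec : ∀ t ω, X (t + 1) ω = (X t ω - 1) + A (t + 1) ω)
    (hYrec : ∀ t ω, Y (t + 1) ω = (Y t ω - (if X t ω = 0 then 1 else 0)) + B (t + 1) ω)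
    (t : ℕ) :
    IndepFun (fun ω => (X t ω, Y t ω)) (fun ω => (A (t + 1) ω, B (t + 1) ω)) μ := by
  set S : Finset ℕ := Finset.range (t + 1) with hS
  set T : Finset ℕ := {t + 1} with hT
  have hdisj : Disjoint S T := by
    simp only [hS, hT, Finset.disjoint_right, Finset.mem_singleton, Finset.mem_range]
    rintro i rfl
    omega
  have h := hindep.indepFun_finset S T hdisj
    (fun i => (hAmeas i).prodMk (hBmeas i))
  set φ : (S → ℕ × ℕ) → ℕ × ℕ :=
    fun h => pqF t (fun i => if hi : i ∈ S then h ⟨i, hi⟩ else 0) with hφdef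
  set ψ : (T → ℕ × ℕ) → ℕ × ℕ := fun h => h ⟨t + 1, Finset.mem_singleton_self _⟩ with hψdef
  have hφ : Measurable φ := by
    apply (pqF_measurable t).comp
    apply measurable_pi_lambda
    intro i
    by_cases hi : i ∈ S
    · simp only [hi, dif_pos]
      exact measurable_pi_apply _
    · simp only [hi, dif_neg, not_false_iff]
      exact measurable_const
  have hψ : Measurable ψ := measurable_pi_apply _
  have hcomp := h.comp hφ hψ
  have e1 : (φ ∘ fun a (i : S) => ((A i a, B i a) : ℕ × ℕ)) = fun ω => (X t ω, Y t ω) := by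
    funext ω
    simp only [Function.comp_apply, hφdef]
    rw [pq_XY_eq_F A B X Y hX0 hY0 hXrec hYrec t ω]
    apply pqF_congr
    intro i hi
    simp [hS, hi]
  have e2 : (ψ ∘ fun a (i : T) => ((A i a, B i a) : ℕ × ℕ))
      = fun ω => (A (t + 1) ω, B (t + 1) ω) := rfl
  rwa [e1, e2] at hcomp

/-- The generating-function value `E[u^{X_t} v^{Y_t}]`. -/
noncomputable def pqG {Ω : Type*} [MeasurableSpace Ω] (μ : Measure Ω)
    (X Y : ℕ → Ω → ℕ) (t : ℕ) (u v : ℝ) : ℝ :=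
  ∫ ω, u ^ X t ω * v ^ Y t ω ∂μ

/-- The post-service generating-function value. -/
noncomputable def pqH {Ω : Type*} [MeasurableSpace Ω] (μ : Measure Ω)
    (X Y : ℕ → Ω → ℕ) (t : ℕ) (u v : ℝ) : ℝ :=
  ∫ ω, u ^ (X t ω - 1) * v ^ (Y t ω - if X t ω = 0 then 1 else 0) ∂μ

/-- priority queue functional equation: for a single-server queue with two
independent i.i.d. arrival flows of generating functions `A` (priority) and `B`, with state
`(X_t, Y_t)` evolving by `X_{t+1} = (X_t - 1)₊ + A_{t+1}`,
`Y_{t+1} = (Y_t - 1_{X_t = 0})₊ + B_{t+1}`, the trivariate generating function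
`Φ(u,v,z) = ∑ P(X_t = n, Y_t = m) uⁿ vᵐ zᵗ` satisfies
`Φ(u,v,z)·(1 - z·A(u)·B(v)/u)
  = 1 - z·A(u)·B(v)·[Φ(0,v,z)·(1/u - 1/v) + Φ(0,0,z)·(1/v - 1)]`. -/
theorem priority_queue_functional_equation {Ω : Type*} [MeasurableSpace Ω] (μ : Measure Ω)
    [IsProbabilityMeasure μ]
    (A B : ℕ → Ω → ℕ) (hAmeas : ∀ t, Measurable (A t)) (hBmeas : ∀ t, Measurable (B t))
    (hindep : iIndepFun (fun t ω => (A t ω, B t ω)) μ)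
    (hAB : ∀ t, IndepFun (A t) (B t) μ)
    (hid : ∀ t, μ.map (fun ω => (A t ω, B t ω)) = μ.map (fun ω => (A 0 ω, B 0 ω)))
    (X Y : ℕ → Ω → ℕ)
    (hX0 : ∀ ω, X 0 ω = 0) (hY0 : ∀ ω, Y 0 ω = 0)
    (hXrec : ∀ t ω, X (t + 1) ω = (X t ω - 1) + A (t + 1) ω)
    (hYrec : ∀ t ω, Y (t + 1) ω = (Y t ω - (if X t ω = 0 then 1 else 0)) + B (t + 1) ω)
    (a b : ℕ → ℝ)
    (ha : ∀ n, a n = (μ {ω | A 0 ω = n}).toReal)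
    (hb : ∀ n, b n = (μ {ω | B 0 ω = n}).toReal)
    (Φ : ℝ → ℝ → ℝ → ℝ)
    (hΦ : ∀ u v z, Φ u v z
      = ∑' t : ℕ,
          (∑' n : ℕ, ∑' m : ℕ,
            (μ {ω | X t ω = n ∧ Y t ω = m}).toReal * u ^ n * v ^ m) * z ^ t) :
    ∀ u ∈ Set.Ioo (0 : ℝ) 1, ∀ v ∈ Set.Ioo (0 : ℝ) 1, ∀ z ∈ Set.Ioo (0 : ℝ) 1,
      Φ u v z * (1 - z * (∑' n, a n * u ^ n) * (∑' m, b m * v ^ m) / u)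
        = 1 - z * (∑' n, a n * u ^ n) * (∑' m, b m * v ^ m)
            * (Φ 0 v z * (1 / u - 1 / v) + Φ 0 0 z * (1 / v - 1)) := by
  intro u hu v hv z hz
  obtain ⟨hu0, hu1⟩ := hu
  obtain ⟨hv0, hv1⟩ := hv
  obtain ⟨hz0, hz1⟩ := hz
  -- measurability
  have hpair : ∀ t, Measurable (fun ω => (X t ω, Y t ω)) := by
    intro t
    have e : (fun ω => (X t ω, Y t ω)) = (pqF t) ∘ (fun ω i => (A i ω, B i ω)) :=
      funext (pq_XY_eq_F A B X Y hX0 hY0 hXrec hYrec t)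
    rw [e]
    exact (pqF_measurable t).comp
      (measurable_pi_lambda _ fun i => ((hAmeas i).prodMk (hBmeas i)))
  have hXm : ∀ t, Measurable (X t) := fun t => measurable_fst.comp (hpair t)
  have hYm : ∀ t, Measurable (Y t) := fun t => measurable_snd.comp (hpair t)
  -- integrability
  have hInt : ∀ (t : ℕ) (u' v' : ℝ), 0 ≤ u' → u' ≤ 1 → 0 ≤ v' → v' ≤ 1 →
      Integrable (fun ω => u' ^ X t ω * v' ^ Y t ω) μ := fun t u' v' h1 h2 h3 h4 =>
    pq_integrable_of_bounded μ
      ((measurable_of_countable (fun p : ℕ × ℕ => u' ^ p.1 * v' ^ p.2)).comp (hpair t))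
      (fun ω => pq_abs_g_le_one h1 h2 h3 h4 (X t ω, Y t ω))
  -- bound on G
  have hGb : ∀ (t : ℕ) (u' v' : ℝ), 0 ≤ u' → u' ≤ 1 → 0 ≤ v' → v' ≤ 1 →
      |pqG μ X Y t u' v'| ≤ 1 := by
    intro t u' v' h1 h2 h3 h4
    have := norm_integral_le_of_norm_le_const
      (μ := μ) (C := 1) (f := fun ω => u' ^ X t ω * v' ^ Y t ω)
      (ae_of_all _ fun ω => by
        rw [Real.norm_eq_abs]; exact pq_abs_g_le_one h1 h2 h3 h4 (X t ω, Y t ω))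
    simpa [pqG, Real.norm_eq_abs, measure_univ] using this
  -- summability of the time series
  have hsumG : ∀ (u' v' : ℝ), 0 ≤ u' → u' ≤ 1 → 0 ≤ v' → v' ≤ 1 →
      Summable (fun t => pqG μ X Y t u' v' * z ^ t) := by
    intro u' v' h1 h2 h3 h4
    apply Summable.of_norm_bounded
      (summable_geometric_of_lt_one hz0.le hz1)
    intro t
    rw [norm_mul]
    calc ‖pqG μ X Y t u' v'‖ * ‖z ^ t‖ ≤ 1 * ‖z ^ t‖ := by
          apply mul_le_mul_of_nonneg_right _ (norm_nonneg _)
          rw [Real.norm_eq_abs]; exact hGb t u' v' h1 h2 h3 h4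
      _ = z ^ t := by
          rw [one_mul, Real.norm_eq_abs, abs_of_nonneg (pow_nonneg hz0.le _)]
  -- Φ as a series in G
  have hΦeq : ∀ (u' v' : ℝ), 0 ≤ u' → u' ≤ 1 → 0 ≤ v' → v' ≤ 1 →
      Φ u' v' z = ∑' t, pqG μ X Y t u' v' * z ^ t := by
    intro u' v' h1 h2 h3 h4
    rw [hΦ]
    exact tsum_congr fun t => by
      rw [pq_double_tsum_eq_integral μ (X t) (Y t) (hXm t) (hYm t) u' v' h1 h2 h3 h4]; rfl
  -- G at time 0 is 1
  have hG0 : ∀ u' v' : ℝ, pqG μ X Y 0 u' v' = 1 := by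
    intro u' v'; simp [pqG, hX0, hY0]
  -- the arrival generating function value
  have hABpm : ∀ s, Measurable (fun ω => (A s ω, B s ω)) :=
    fun s => (hAmeas s).prodMk (hBmeas s)
  have hc : ∀ s : ℕ, (∫ ω, u ^ A s ω * v ^ B s ω ∂μ)
      = (∑' n, a n * u ^ n) * (∑' m, b m * v ^ m) := by
    intro s
    have g2m : Measurable (fun p : ℕ × ℕ => u ^ p.1 * v ^ p.2) := measurable_of_countable _
    have e1 : (∫ ω, u ^ A s ω * v ^ B s ω ∂μ) = ∫ ω, u ^ A 0 ω * v ^ B 0 ω ∂μ := by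
      have r1 : (∫ ω, u ^ A s ω * v ^ B s ω ∂μ)
          = ∫ p, (fun p : ℕ × ℕ => u ^ p.1 * v ^ p.2) p ∂(μ.map (fun ω => (A s ω, B s ω))) := by
        rw [integral_map (hABpm s).aemeasurable g2m.aestronglyMeasurable]
      have r2 : (∫ ω, u ^ A 0 ω * v ^ B 0 ω ∂μ)
          = ∫ p, (fun p : ℕ × ℕ => u ^ p.1 * v ^ p.2) p ∂(μ.map (fun ω => (A 0 ω, B 0 ω))) := by
        rw [integral_map (hABpm 0).aemeasurable g2m.aestronglyMeasurable]
      rw [r1, r2, hid s]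
    rw [e1]
    have e2 := ((hAB 0).comp (measurable_of_countable fun n : ℕ => u ^ n)
        (measurable_of_countable fun m : ℕ => v ^ m)).integral_mul_eq_mul_integral
      ((measurable_of_countable fun n : ℕ => u ^ n).comp (hAmeas 0)).aestronglyMeasurable
      ((measurable_of_countable fun m : ℕ => v ^ m).comp (hBmeas 0)).aestronglyMeasurable
    have eA : (∫ ω, u ^ A 0 ω ∂μ) = ∑' n, a n * u ^ n := by
      rw [pq_integral_comp_countable μ (A 0) (hAmeas 0) (fun n => u ^ n)
        (fun n => by
          rw [abs_of_nonneg (pow_nonneg hu0.le _)]; exact pow_le_one₀ hu0.le hu1.le)]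
      exact tsum_congr fun n => by rw [ha n]
    have eB : (∫ ω, v ^ B 0 ω ∂μ) = ∑' m, b m * v ^ m := by
      rw [pq_integral_comp_countable μ (B 0) (hBmeas 0) (fun m => v ^ m)
        (fun m => by
          rw [abs_of_nonneg (pow_nonneg hv0.le _)]; exact pow_le_one₀ hv0.le hv1.le)]
      exact tsum_congr fun m => by rw [hb m]
    calc (∫ ω, u ^ A 0 ω * v ^ B 0 ω ∂μ)
        = (∫ ω, u ^ A 0 ω ∂μ) * ∫ ω, v ^ B 0 ω ∂μ := e2
      _ = _ := by rw [eA, eB]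
  -- one-step recursion
  have hstep : ∀ t, pqG μ X Y (t + 1) u v
      = (∑' n, a n * u ^ n) * (∑' m, b m * v ^ m) * pqH μ X Y t u v := by
    intro t
    have hind := pq_indep μ A B hAmeas hBmeas hindep X Y hX0 hY0 hXrec hYrec t
    have hI := (hind.comp
        (measurable_of_countable
          (fun p : ℕ × ℕ => u ^ (p.1 - 1) * v ^ (p.2 - if p.1 = 0 then 1 else 0)))
        (measurable_of_countable (fun p : ℕ × ℕ => u ^ p.1 * v ^ p.2))).integral_mul_eq_mul_integral
      ((measurable_of_countable _).comp (hpair t)).aestronglyMeasurable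
      ((measurable_of_countable _).comp (hABpm (t + 1))).aestronglyMeasurable
    have e0 : pqG μ X Y (t + 1) u v
        = ∫ ω, (u ^ (X t ω - 1) * v ^ (Y t ω - if X t ω = 0 then 1 else 0))
            * (u ^ A (t + 1) ω * v ^ B (t + 1) ω) ∂μ := by
      unfold pqG
      apply integral_congr_ae
      apply Filter.Eventually.of_forall
      intro ω
      simp only [hXrec t, hYrec t, pow_add]
      ring
    rw [e0]
    calc (∫ ω, (u ^ (X t ω - 1) * v ^ (Y t ω - if X t ω = 0 then 1 else 0))
            * (u ^ A (t + 1) ω * v ^ B (t + 1) ω) ∂μ)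
        = (∫ ω, u ^ (X t ω - 1) * v ^ (Y t ω - if X t ω = 0 then 1 else 0) ∂μ)
            * ∫ ω, u ^ A (t + 1) ω * v ^ B (t + 1) ω ∂μ := hI
      _ = _ := by rw [hc (t + 1)]; unfold pqH; ring
  -- splitting of H
  have hsplit : ∀ t, pqH μ X Y t u v
      = pqG μ X Y t u v / u - pqG μ X Y t 0 v / u
        + (pqG μ X Y t 0 v / v - pqG μ X Y t 0 0 / v) + pqG μ X Y t 0 0 := by
    intro t
    have h1 := hInt t u v hu0.le hu1.le hv0.le hv1.le
    have h2 := hInt t 0 v le_rfl zero_le_one hv0.le hv1.le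
    have h3 := hInt t 0 0 le_rfl zero_le_one le_rfl zero_le_one
    have hpt : ∀ ω, u ^ (X t ω - 1) * v ^ (Y t ω - if X t ω = 0 then 1 else 0)
        = u ^ X t ω * v ^ Y t ω / u - (0:ℝ) ^ X t ω * v ^ Y t ω / u +
          ((0:ℝ) ^ X t ω * v ^ Y t ω / v - (0:ℝ) ^ X t ω * (0:ℝ) ^ Y t ω / v) +
          (0:ℝ) ^ X t ω * (0:ℝ) ^ Y t ω :=
      fun ω => pq_pow_split u v hu0.ne' hv0.ne' (X t ω) (Y t ω)
    have hI12 : Integrable (fun ω =>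
        u ^ X t ω * v ^ Y t ω / u - (0:ℝ) ^ X t ω * v ^ Y t ω / u) μ :=
      (h1.div_const u).sub (h2.div_const u)
    have hI34 : Integrable (fun ω =>
        (0:ℝ) ^ X t ω * v ^ Y t ω / v - (0:ℝ) ^ X t ω * (0:ℝ) ^ Y t ω / v) μ :=
      (h2.div_const v).sub (h3.div_const v)
    have hIbig : Integrable (fun ω =>
        u ^ X t ω * v ^ Y t ω / u - (0:ℝ) ^ X t ω * v ^ Y t ω / u
          + ((0:ℝ) ^ X t ω * v ^ Y t ω / v - (0:ℝ) ^ X t ω * (0:ℝ) ^ Y t ω / v)) μ :=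
      hI12.add hI34
    unfold pqH pqG
    rw [integral_congr_ae (Filter.Eventually.of_forall hpt)]
    rw [integral_add hIbig h3, integral_add hI12 hI34,
        integral_sub (h1.div_const u) (h2.div_const u),
        integral_sub (h2.div_const v) (h3.div_const v),
        integral_div, integral_div, integral_div, integral_div]
  -- assemble the master equation
  have hsum1 := hsumG u v hu0.le hu1.le hv0.le hv1.le
  have hsum2 := hsumG 0 v le_rfl zero_le_one hv0.le hv1.le
  have hsum3 := hsumG 0 0 le_rfl zero_le_one le_rfl zero_le_one
  set c : ℝ := (∑' n, a n * u ^ n) * (∑' m, b m * v ^ m) with hcdef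
  have hterm : ∀ t, pqG μ X Y (t + 1) u v * z ^ (t + 1)
      = pqG μ X Y t u v * z ^ t * (z * c / u)
        - pqG μ X Y t 0 v * z ^ t * (z * c / u)
        + (pqG μ X Y t 0 v * z ^ t * (z * c / v)
          - pqG μ X Y t 0 0 * z ^ t * (z * c / v))
        + pqG μ X Y t 0 0 * z ^ t * (z * c) := by
    intro t
    rw [hstep t, hsplit t, pow_succ]
    ring
  have hmaster : Φ u v z = 1 + (Φ u v z * (z * c / u) - Φ 0 v z * (z * c / u)
      + (Φ 0 v z * (z * c / v) - Φ 0 0 z * (z * c / v)) + Φ 0 0 z * (z * c)) := by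
    have hp1 : Summable (fun t => pqG μ X Y t u v * z ^ t * (z * c / u)) :=
      hsum1.mul_right _
    have hp2 : Summable (fun t => pqG μ X Y t 0 v * z ^ t * (z * c / u)) :=
      hsum2.mul_right _
    have hp3 : Summable (fun t => pqG μ X Y t 0 v * z ^ t * (z * c / v)) :=
      hsum2.mul_right _
    have hp4 : Summable (fun t => pqG μ X Y t 0 0 * z ^ t * (z * c / v)) :=
      hsum3.mul_right _
    have hp5 : Summable (fun t => pqG μ X Y t 0 0 * z ^ t * (z * c)) :=
      hsum3.mul_right _
    calc Φ u v z = ∑' t, pqG μ X Y t u v * z ^ t :=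
          hΦeq u v hu0.le hu1.le hv0.le hv1.le
      _ = pqG μ X Y 0 u v * z ^ 0 + ∑' t, pqG μ X Y (t + 1) u v * z ^ (t + 1) :=
          Summable.tsum_eq_zero_add hsum1
      _ = 1 + ∑' t, (pqG μ X Y t u v * z ^ t * (z * c / u)
            - pqG μ X Y t 0 v * z ^ t * (z * c / u)
            + (pqG μ X Y t 0 v * z ^ t * (z * c / v)
              - pqG μ X Y t 0 0 * z ^ t * (z * c / v))
            + pqG μ X Y t 0 0 * z ^ t * (z * c)) := by
          rw [hG0, tsum_congr hterm]; simp only [pow_zero, mul_one]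
      _ = 1 + ((∑' t, pqG μ X Y t u v * z ^ t) * (z * c / u)
            - (∑' t, pqG μ X Y t 0 v * z ^ t) * (z * c / u)
            + ((∑' t, pqG μ X Y t 0 v * z ^ t) * (z * c / v)
              - (∑' t, pqG μ X Y t 0 0 * z ^ t) * (z * c / v))
            + (∑' t, pqG μ X Y t 0 0 * z ^ t) * (z * c)) := by
          rw [Summable.tsum_add ((hp1.sub hp2).add (hp3.sub hp4)) hp5,
              Summable.tsum_add (hp1.sub hp2) (hp3.sub hp4),
              Summable.tsum_sub hp1 hp2, Summable.tsum_sub hp3 hp4,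
              tsum_mul_right, tsum_mul_right, tsum_mul_right, tsum_mul_right,
              tsum_mul_right]
      _ = _ := by
          rw [← hΦeq u v hu0.le hu1.le hv0.le hv1.le,
              ← hΦeq 0 v le_rfl zero_le_one hv0.le hv1.le,
              ← hΦeq 0 0 le_rfl zero_le_one le_rfl zero_le_one]
  linear_combination hmaster
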